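/- Let A₁ and A₂ be VRAs over the same pushdown alphabet with disjoint procedural alphabets, and let B be the product VRA whose procedural symbols are pairs ⟨J₁, J₂⟩ with f₁(J₁) = f₂(J₂), whose component automaton B^{⟨J₁,J₂⟩} is the product automaton of A₁^{J₁} and A₂^{J₂} (with procedural transitions on ⟨K₁,K₂⟩ present iff both factors have procedural transitions on K₁ and K₂ respectively), and whose starting automaton is the analogous product of A₁^S and A₂^S. Then for every well-matched word w and product states ⟨q₁,q₂⟩, ⟨p₁,p₂⟩: ⟨⟨q₁,q₂⟩, ε⟩ →^w ⟨⟨p₁,p₂⟩, ε⟩ is a recursive run of B iff ⟨q₁, ε⟩ →^w ⟨p₁, ε⟩ is a recursive run of A₁ and ⟨q₂, ε⟩ →^w ⟨p₂, ε⟩ is a recursive run of A₂. Consequently, L(B) = L(A₁) ∩ L(A₂). -/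

import Mathlib

/-- A symbol of a pushdown alphabet: internal, call, or return. -/
inductive VSym (I C R : Type) : Type
  | int  : I → VSym I C R
  | call : C → VSym I C R
  | ret  : R → VSym I C R

/-- The set of well-matched words over a pushdown alphabet. -/
inductive WellMatched {I C R : Type} : List (VSym I C R) → Prop
  | internal (u : List I) : WellMatched (u.map VSym.int)
  | bracket {w : List (VSym I C R)} (c : C) (r : R) :
      WellMatched w → WellMatched (VSym.call c :: w ++ [VSym.ret r])
  | concat {w₁ w₂ : List (VSym I C R)} :
      WellMatched w₁ → WellMatched w₂ → WellMatched (w₁ ++ w₂)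

def VSym.isCall {I C R : Type} : VSym I C R → Bool
  | .call _ => true
  | _ => false

def VSym.isRet {I C R : Type} : VSym I C R → Bool
  | .ret _ => true
  | _ => false

/-- The depth of a word: the maximal excess of call symbols over return symbols
in any prefix (the deepest level of unmatched calls at any point). -/
def VSym.depth {I C R : Type} (w : List (VSym I C R)) : ℕ :=
  (w.inits.map fun p => p.countP VSym.isCall - p.countP VSym.isRet).foldr max 0

/-- A visibly recursive automaton: a family of finite automata over the internal
and procedural symbols, identified by the component map `comp` (`none` denotes the
starting automaton `A^S`, `some J` the component automaton `A^J`), together with a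
linking function `link` assigning to each procedural symbol a call/return pair.
Transitions of each component automaton stay within that component. -/
structure VRA (I C R P Q : Type) where
  /-- the linking function `f : Σ_proc → Σ_call × Σ_ret` -/
  link : P → C × R
  /-- the component automaton each state belongs to (`none` = starting automaton) -/
  comp : Q → Option P
  init : Q → Prop
  final : Q → Prop
  intTrans : Q → I → Q → Prop
  procTrans : Q → P → Q → Prop
  intTrans_comp : ∀ ⦃q a p⦄, intTrans q a p → comp p = comp q
  procTrans_comp : ∀ ⦃q J p⦄, procTrans q J p → comp p = comp q

namespace VRA

variable {I C R P Q : Type}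

/-- One step of a recursive run, on configurations (state, stack of states). -/
inductive Step (A : VRA I C R P Q) : Q × List Q → VSym I C R → Q × List Q → Prop
  | int {q q' : Q} {σ : List Q} {a : I} :
      A.intTrans q a q' → Step A (q, σ) (VSym.int a) (q', σ)
  | call {q q' p : Q} {σ : List Q} {J : P} {c : C} :
      A.procTrans q J p → (A.link J).1 = c → A.comp q' = some J → A.init q' →
      Step A (q, σ) (VSym.call c) (q', p :: σ)
  | ret {q p : Q} {σ : List Q} {J : P} {r : R} :
      A.comp q = some J → A.final q → (A.link J).2 = r →
      Step A (q, p :: σ) (VSym.ret r) (p, σ)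

/-- Recursive runs of a VRA. -/
inductive Run (A : VRA I C R P Q) : Q × List Q → List (VSym I C R) → Q × List Q → Prop
  | nil (cfg : Q × List Q) : Run A cfg [] cfg
  | cons {cfg₁ cfg₂ cfg₃ : Q × List Q} {a : VSym I C R} {w : List (VSym I C R)} :
      Step A cfg₁ a cfg₂ → Run A cfg₂ w cfg₃ → Run A cfg₁ (a :: w) cfg₃

/-- The recursive language of the component automaton `A^J` (`J = none` is the
starting automaton): words with a recursive run from an initial state of the
component with empty stack to a final state of the component with empty stack. -/
def RecLang (A : VRA I C R P Q) (J : Option P) : Set (List (VSym I C R)) :=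
  {w | ∃ qi qf, A.comp qi = J ∧ A.init qi ∧ A.comp qf = J ∧ A.final qf ∧
    Run A (qi, []) w (qf, [])}

/-- The language of a VRA: the recursive language of its starting automaton. -/
def Lang (A : VRA I C R P Q) : Set (List (VSym I C R)) := A.RecLang none

/-- Regular runs: runs of the component automata viewed as ordinary finite
automata over the alphabet `Σ_int ∪ Σ_proc`. -/
inductive RegRun (A : VRA I C R P Q) : Q → List (I ⊕ P) → Q → Prop
  | nil (q : Q) : RegRun A q [] q
  | int {q q' p : Q} {a : I} {w : List (I ⊕ P)} :
      A.intTrans q a q' → RegRun A q' w p → RegRun A q (Sum.inl a :: w) p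
  | proc {q q' p : Q} {J : P} {w : List (I ⊕ P)} :
      A.procTrans q J q' → RegRun A q' w p → RegRun A q (Sum.inr J :: w) p

/-- The regular language of the component automaton `A^J`, over `Σ_int ∪ Σ_proc`. -/
def RegLang (A : VRA I C R P Q) (J : Option P) : Set (List (I ⊕ P)) :=
  {w | ∃ qi qf, A.comp qi = J ∧ A.init qi ∧ A.comp qf = J ∧ A.final qf ∧
    RegRun A qi w qf}

/-- A VRA is codeterministic if component automata linked to the same call/return
pair have pairwise disjoint recursive languages. -/
def Codeterministic (A : VRA I C R P Q) : Prop :=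
  ∀ J J' : P, J ≠ J' → A.link J = A.link J' →
    A.RecLang (some J) ∩ A.RecLang (some J') = ∅

/-- A VRA is complete if every state has an outgoing transition on every symbol of
`Σ_int ∪ Σ_proc`, and for every call/return pair the recursive languages of the
linked component automata cover all well-matched words. -/
def Complete (A : VRA I C R P Q) : Prop :=
  (∀ (q : Q) (a : I), ∃ p, A.intTrans q a p) ∧
  (∀ (q : Q) (J : P), ∃ p, A.procTrans q J p) ∧
  (∀ (c : C) (r : R),
    (⋃ J ∈ {J : P | A.link J = (c, r)}, A.RecLang (some J)) = {w | WellMatched w})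

/-- A VRA is deterministic if every component automaton (including the starting
one) has a unique initial state and deterministic transitions, and procedural
transitions from a common state on procedural symbols with the same call symbol
agree on the procedural symbol. -/
def Deterministic (A : VRA I C R P Q) : Prop :=
  (∀ J : Option P, ∃! q, A.comp q = J ∧ A.init q) ∧
  (∀ q a p p', A.intTrans q a p → A.intTrans q a p' → p = p') ∧
  (∀ q J p p', A.procTrans q J p → A.procTrans q J p' → p = p') ∧
  (∀ q J J' p p', A.procTrans q J p → A.procTrans q J' p' →
    (A.link J).1 = (A.link J').1 → J = J')

/-- All component automata of the VRA are complete DFAs: a unique initial state in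
each component and exactly one outgoing transition per state and symbol. -/
def AllCompleteDFA (A : VRA I C R P Q) : Prop :=
  (∀ J : Option P, ∃! q, A.comp q = J ∧ A.init q) ∧
  (∀ (q : Q) (a : I), ∃! p, A.intTrans q a p) ∧
  (∀ (q : Q) (J : P), ∃! p, A.procTrans q J p)

/-- The size of a VRA: number of states plus number of transitions. -/
noncomputable def size (A : VRA I C R P Q) : ℕ :=
  Nat.card Q + Nat.card {t : Q × I × Q // A.intTrans t.1 t.2.1 t.2.2}
    + Nat.card {t : Q × P × Q // A.procTrans t.1 t.2.1 t.2.2}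

end VRA

namespace VRA

variable {I C R P₁ P₂ Q₁ Q₂ : Type}

/-- The procedural alphabet of the product VRA: pairs `⟨J₁,J₂⟩` of procedural
symbols with matching call/return pairs, `f₁(J₁) = f₂(J₂)`. -/
def ProdProc (A₁ : VRA I C R P₁ Q₁) (A₂ : VRA I C R P₂ Q₂) : Type :=
  {p : P₁ × P₂ // A₁.link p.1 = A₂.link p.2}

/-- A pair of states is good if both lie in the starting automata, or both lie in
component automata with matching call/return pairs. -/
def GoodPair (A₁ : VRA I C R P₁ Q₁) (A₂ : VRA I C R P₂ Q₂) (x : Q₁ × Q₂) : Prop :=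
  (A₁.comp x.1 = none ∧ A₂.comp x.2 = none) ∨
  ∃ (J₁ : P₁) (J₂ : P₂), A₁.comp x.1 = some J₁ ∧ A₂.comp x.2 = some J₂ ∧
    A₁.link J₁ = A₂.link J₂

/-- The state space of the product VRA: good pairs of states. -/
def ProdState (A₁ : VRA I C R P₁ Q₁) (A₂ : VRA I C R P₂ Q₂) : Type :=
  {x : Q₁ × Q₂ // GoodPair A₁ A₂ x}

open Classical

/-- The component of a pair of states in the product VRA. -/
noncomputable def mergeComp (f₁ : P₁ → C × R) (f₂ : P₂ → C × R) :
    Option P₁ → Option P₂ → Option {p : P₁ × P₂ // f₁ p.1 = f₂ p.2}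
  | some J₁, some J₂ =>
      if h : f₁ J₁ = f₂ J₂ then some ⟨(J₁, J₂), h⟩ else none
  | _, _ => none

/-- The product VRA of `A₁` and `A₂`: procedural symbols are matching pairs,
states are good pairs, initial/final states and transitions are synchronized
componentwise, and the starting automaton is the product of the starting
automata. -/
noncomputable def prod (A₁ : VRA I C R P₁ Q₁) (A₂ : VRA I C R P₂ Q₂) :
    VRA I C R (ProdProc A₁ A₂) (ProdState A₁ A₂) where
  link J := A₁.link J.1.1
  comp x := mergeComp A₁.link A₂.link (A₁.comp x.1.1) (A₂.comp x.1.2)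
  init x := A₁.init x.1.1 ∧ A₂.init x.1.2
  final x := A₁.final x.1.1 ∧ A₂.final x.1.2
  intTrans x a y := A₁.intTrans x.1.1 a y.1.1 ∧ A₂.intTrans x.1.2 a y.1.2
  procTrans x J y := A₁.procTrans x.1.1 J.1.1 y.1.1 ∧ A₂.procTrans x.1.2 J.1.2 y.1.2
  intTrans_comp := by
    rintro x a y ⟨h₁, h₂⟩
    exact congrArg₂ (mergeComp A₁.link A₂.link) (A₁.intTrans_comp h₁) (A₂.intTrans_comp h₂)
  procTrans_comp := by
    rintro x J y ⟨h₁, h₂⟩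
    exact congrArg₂ (mergeComp A₁.link A₂.link) (A₁.procTrans_comp h₁) (A₂.procTrans_comp h₂)

end VRA

namespace VRA

variable {I C R P Q : Type} {A : VRA I C R P Q}

lemma Run.append {c c' c'' : Q × List Q} {w₁ w₂ : List (VSym I C R)}
    (h₁ : A.Run c w₁ c') (h₂ : A.Run c' w₂ c'') : A.Run c (w₁ ++ w₂) c'' := by
  induction h₁ with
  | nil => exact h₂
  | cons s _ ih => exact Run.cons s (ih h₂)

lemma run_append_split {c c'' : Q × List Q} {w₁ w₂ : List (VSym I C R)}
    (h : A.Run c (w₁ ++ w₂) c'') : ∃ c', A.Run c w₁ c' ∧ A.Run c' w₂ c'' := by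
  induction w₁ generalizing c with
  | nil => exact ⟨c, Run.nil c, h⟩
  | cons a w₁ ih =>
      cases h with
      | cons s r =>
          obtain ⟨c', r₁, r₂⟩ := ih r
          exact ⟨c', Run.cons s r₁, r₂⟩

/-- Runs on well-matched words restore the stack, preserve the component, and
are independent of the stack below. -/
lemma wm_run {w : List (VSym I C R)} (hw : WellMatched w) :
    ∀ q σ p τ, A.Run (q, σ) w (p, τ) →
      τ = σ ∧ A.comp p = A.comp q ∧ ∀ ρ, A.Run (q, ρ) w (p, ρ) := by
  induction hw with
  | internal u =>
      induction u with
      | nil =>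
          intro q σ p τ h
          cases h
          exact ⟨rfl, rfl, fun ρ => Run.nil _⟩
      | cons a u ih =>
          intro q σ p τ h
          cases h with
          | cons s r =>
              cases s with
              | int ht =>
                  obtain ⟨h1, h2, h3⟩ := ih _ _ _ _ r
                  exact ⟨h1, h2.trans (A.intTrans_comp ht),
                    fun ρ => Run.cons (Step.int ht) (h3 ρ)⟩
  | bracket c r hw ih =>
      intro q σ p τ h
      cases h with
      | cons s rest =>
          cases s with
          | call hproc hlink hcomp hinit =>
              obtain ⟨⟨m, ρ⟩, r₁, r₂⟩ := run_append_split rest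
              cases r₂ with
              | cons s₂ rnil =>
                  cases rnil
                  cases s₂ with
                  | ret hcm hfin hlr =>
                      obtain ⟨heq, hcomp', hlift⟩ := ih _ _ _ _ r₁
                      have h1 : p = _ := (List.cons.injEq _ _ _ _ ▸ heq).1
                      have h2 : τ = σ := (List.cons.injEq _ _ _ _ ▸ heq).2
                      subst h1
                      refine ⟨h2, (A.procTrans_comp hproc).symm ▸ rfl, fun ρ' => ?_⟩
                      exact Run.cons (Step.call hproc hlink hcomp hinit)
                        (Run.append (hlift (p :: ρ'))
                          (Run.cons (Step.ret hcm hfin hlr) (Run.nil _)))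
  | concat hw₁ hw₂ ih₁ ih₂ =>
      intro q σ p τ h
      obtain ⟨⟨m, ρ⟩, r₁, r₂⟩ := run_append_split h
      obtain ⟨h1, h2, h3⟩ := ih₁ _ _ _ _ r₁
      subst h1
      obtain ⟨h4, h5, h6⟩ := ih₂ _ _ _ _ r₂
      exact ⟨h4, h5.trans h2, fun ρ' => (h3 ρ').append (h6 ρ')⟩

/-- Decomposition of a run that pops its stack down to empty. -/
lemma run_pop : ∀ (n : ℕ) (w : List (VSym I C R)), w.length ≤ n → ∀ q s σ p,
    A.Run (q, s :: σ) w (p, []) →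
    ∃ u r v m, w = u ++ VSym.ret r :: v ∧ (∀ ρ, A.Run (q, ρ) u (m, ρ)) ∧
      (∃ J, A.comp m = some J ∧ A.final m ∧ (A.link J).2 = r) ∧
      A.Run (s, σ) v (p, []) := by
  intro n
  induction n with
  | zero =>
      intro w hl q s σ p h
      have hw : w = [] := List.length_eq_zero_iff.mp (Nat.le_zero.mp hl)
      subst hw
      cases h
  | succ n ih =>
      intro w hl q s σ p h
      cases h with
      | cons st rest =>
          rename_i cfg₂ a w'
          cases st with
          | @int _ q' _ aa ht =>
              obtain ⟨u, r, v, m, hwd, hu, hret, hv⟩ :=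
                ih w' (by simpa using Nat.le_of_succ_le_succ (by simpa using hl)) _ s σ p rest
              refine ⟨VSym.int aa :: u, r, v, m, by rw [hwd]; rfl,
                fun ρ => Run.cons (Step.int ht) (hu ρ), hret, hv⟩
          | @call _ q' t _ J cc hproc hlink hcomp hinit =>
              have hl' : w'.length ≤ n := by simpa using hl
              obtain ⟨u, r, v, m, hwd, hu, hret, hv⟩ := ih w' hl' _ _ (s :: σ) p rest
              have hvlen : v.length ≤ n := by
                subst hwd
                simp at hl'
                omega
              obtain ⟨u₂, r₂, v₂, m₂, hwd₂, hu₂, hret₂, hv₂⟩ := ih v hvlen _ s σ p hv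
              obtain ⟨J, hJ, hf, hl2⟩ := hret
              refine ⟨VSym.call cc :: u ++ VSym.ret r :: u₂, r₂, v₂, m₂,
                by rw [hwd, hwd₂]; simp, fun ρ => ?_, hret₂, hv₂⟩
              refine Run.cons (Step.call hproc hlink hcomp hinit) ?_
              exact Run.append (hu _) (Run.cons (Step.ret hJ hf hl2) (hu₂ ρ))
          | ret hcm hfin hlr =>
              rename_i J r
              exact ⟨[], r, w', q, rfl, fun ρ => Run.nil _, ⟨J, hcm, hfin, hlr⟩, rest⟩

/-- Words admitting an empty-stack-to-empty-stack run are well-matched. -/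
lemma run_wm : ∀ (n : ℕ) (w : List (VSym I C R)), w.length ≤ n → ∀ q p,
    A.Run (q, []) w (p, []) → WellMatched w := by
  intro n
  induction n with
  | zero =>
      intro w hl q p h
      have hw : w = [] := List.length_eq_zero_iff.mp (Nat.le_zero.mp hl)
      subst hw
      exact WellMatched.internal []
  | succ n ih =>
      intro w hl q p h
      cases h with
      | nil => exact WellMatched.internal []
      | cons st rest =>
          rename_i cfg₂ a w'
          cases st with
          | @int _ q' _ aa ht =>
              have hw' : WellMatched w' := ih w' (by simpa using hl) _ _ rest
              exact WellMatched.concat (WellMatched.internal [aa]) hw'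
          | @call _ q' t _ J cc hproc hlink hcomp hinit =>
              have hl' : w'.length ≤ n := by simpa using hl
              obtain ⟨u, r, v, m, hwd, hu, hret, hv⟩ := run_pop n w' hl' _ _ [] _ rest
              have hulen : u.length ≤ n := by subst hwd; simp at hl'; omega
              have hvlen : v.length ≤ n := by subst hwd; simp at hl'; omega
              have hwmu : WellMatched u := ih u hulen _ _ (hu [])
              have hwmv : WellMatched v := ih v hvlen _ _ hv
              have := WellMatched.concat (WellMatched.bracket cc r hwmu) hwmv
              subst hwd
              simpa using this

lemma run_wm' {w : List (VSym I C R)} {q p : Q} (h : A.Run (q, []) w (p, [])) :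
    WellMatched w := run_wm w.length w le_rfl q p h

variable {P₁ P₂ Q₁ Q₂ : Type}

lemma mergeComp_eq_some {f₁ : P₁ → C × R} {f₂ : P₂ → C × R} {o₁ : Option P₁}
    {o₂ : Option P₂} {J : {p : P₁ × P₂ // f₁ p.1 = f₂ p.2}}
    (h : mergeComp f₁ f₂ o₁ o₂ = some J) : o₁ = some J.1.1 ∧ o₂ = some J.1.2 := by
  cases o₁ with
  | none => simp [mergeComp] at h
  | some J₁ =>
      cases o₂ with
      | none => simp [mergeComp] at h
      | some J₂ =>
          simp only [mergeComp] at h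
          by_cases hf : f₁ J₁ = f₂ J₂
          · rw [dif_pos hf] at h
            cases h
            exact ⟨rfl, rfl⟩
          · rw [dif_neg hf] at h
            cases h

lemma GoodPair.transfer {A₁ : VRA I C R P₁ Q₁} {A₂ : VRA I C R P₂ Q₂}
    {x y : Q₁ × Q₂} (hq : GoodPair A₁ A₂ x)
    (h₁ : A₁.comp y.1 = A₁.comp x.1) (h₂ : A₂.comp y.2 = A₂.comp x.2) :
    GoodPair A₁ A₂ y := by
  rcases hq with ⟨c₁, c₂⟩ | ⟨J₁, J₂, c₁, c₂, hl⟩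
  · exact Or.inl ⟨h₁.trans c₁, h₂.trans c₂⟩
  · exact Or.inr ⟨J₁, J₂, h₁.trans c₁, h₂.trans c₂, hl⟩

/-- Projection of product runs to component runs. -/
lemma prod_run_proj {A₁ : VRA I C R P₁ Q₁} {A₂ : VRA I C R P₂ Q₂}
    {cfg cfg' : ProdState A₁ A₂ × List (ProdState A₁ A₂)} {w : List (VSym I C R)}
    (h : (A₁.prod A₂).Run cfg w cfg') :
    A₁.Run (cfg.1.1.1, cfg.2.map fun x => x.1.1) w
      (cfg'.1.1.1, cfg'.2.map fun x => x.1.1) ∧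
    A₂.Run (cfg.1.1.2, cfg.2.map fun x => x.1.2) w
      (cfg'.1.1.2, cfg'.2.map fun x => x.1.2) := by
  induction h with
  | nil => exact ⟨Run.nil _, Run.nil _⟩
  | cons st rest ih =>
      obtain ⟨ih₁, ih₂⟩ := ih
      cases st with
      | int ht => exact ⟨Run.cons (Step.int ht.1) ih₁, Run.cons (Step.int ht.2) ih₂⟩
      | call hproc hlink hcomp hinit =>
          rename_i q q' pp σ J c
          have hcomp' : mergeComp A₁.link A₂.link (A₁.comp q'.1.1) (A₂.comp q'.1.2)
              = some J := hcomp
          obtain ⟨h₁, h₂⟩ := mergeComp_eq_some hcomp'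
          refine ⟨Run.cons (Step.call hproc.1 hlink h₁ hinit.1) ih₁,
                 Run.cons (Step.call hproc.2 ?_ h₂ hinit.2) ih₂⟩
          rw [← J.2]
          exact hlink
      | ret hcm hfin hlr =>
          rename_i q pp σ J r
          have hcm' : mergeComp A₁.link A₂.link (A₁.comp q.1.1) (A₂.comp q.1.2)
              = some J := hcm
          obtain ⟨h₁, h₂⟩ := mergeComp_eq_some hcm'
          refine ⟨Run.cons (Step.ret h₁ hfin.1 hlr) ih₁,
                 Run.cons (Step.ret h₂ hfin.2 ?_) ih₂⟩
          rw [← J.2]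
          exact hlr

/-- Combination of empty-stack component runs into a product run; the endpoint
is automatically a good pair. -/
lemma prod_run_of {A₁ : VRA I C R P₁ Q₁} {A₂ : VRA I C R P₂ Q₂}
    {w : List (VSym I C R)} (hw : WellMatched w) :
    ∀ q₁ q₂ p₁ p₂, A₁.Run (q₁, []) w (p₁, []) → A₂.Run (q₂, []) w (p₂, []) →
    ∀ hq : GoodPair A₁ A₂ (q₁, q₂), ∃ hp : GoodPair A₁ A₂ (p₁, p₂),
      (A₁.prod A₂).Run ((⟨(q₁, q₂), hq⟩ : ProdState A₁ A₂), []) w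
        ((⟨(p₁, p₂), hp⟩ : ProdState A₁ A₂), []) := by
  induction hw with
  | internal u =>
      induction u with
      | nil =>
          intro q₁ q₂ p₁ p₂ h₁ h₂ hq
          cases h₁
          cases h₂
          exact ⟨hq, Run.nil _⟩
      | cons a u ih =>
          intro q₁ q₂ p₁ p₂ h₁ h₂ hq
          cases h₁ with
          | cons s₁ r₁ =>
              cases h₂ with
              | cons s₂ r₂ =>
                  cases s₁ with
                  | @int _ q₁' _ _ ht₁ =>
                      cases s₂ with
                      | @int _ q₂' _ _ ht₂ =>
                          have hq' : GoodPair A₁ A₂ (q₁', q₂') :=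
                            GoodPair.transfer hq (A₁.intTrans_comp ht₁)
                              (A₂.intTrans_comp ht₂)
                          obtain ⟨hp, run⟩ := ih _ _ _ _ r₁ r₂ hq'
                          exact ⟨hp, Run.cons (Step.int ⟨ht₁, ht₂⟩) run⟩
  | bracket c r hw ih =>
      intro q₁ q₂ p₁ p₂ h₁ h₂ hq
      cases h₁ with
      | cons s₁ rest₁ =>
          cases s₁ with
          | @call _ q₁' t₁ _ J₁ _ hproc₁ hlink₁ hcomp₁ hinit₁ =>
              obtain ⟨⟨m₁, ρ₁⟩, rA₁, rB₁⟩ := run_append_split rest₁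
              cases rB₁ with
              | cons s₁' rnil₁ =>
                  cases rnil₁
                  cases s₁' with
                  | @ret _ _ _ J₁' _ hcm₁ hfin₁ hlr₁ =>
                      obtain ⟨heq₁, hcc₁, hlift₁⟩ := wm_run hw _ _ _ _ rA₁
                      have ht₁ : p₁ = t₁ := (List.cons.injEq _ _ _ _ ▸ heq₁).1
                      cases ht₁
                      have hJm₁ : A₁.comp m₁ = some J₁ := hcc₁.trans hcomp₁
                      have hJ₁' : J₁' = J₁ := by
                        rw [hcm₁] at hJm₁
                        exact Option.some.inj hJm₁
                      cases hJ₁'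
                      cases h₂ with
                      | cons s₂ rest₂ =>
                          cases s₂ with
                          | @call _ q₂' t₂ _ J₂ _ hproc₂ hlink₂ hcomp₂ hinit₂ =>
                              obtain ⟨⟨m₂, ρ₂⟩, rA₂, rB₂⟩ := run_append_split rest₂
                              cases rB₂ with
                              | cons s₂' rnil₂ =>
                                  cases rnil₂
                                  cases s₂' with
                                  | @ret _ _ _ J₂' _ hcm₂ hfin₂ hlr₂ =>
                                      obtain ⟨heq₂, hcc₂, hlift₂⟩ := wm_run hw _ _ _ _ rA₂
                                      have ht₂ : p₂ = t₂ := (List.cons.injEq _ _ _ _ ▸ heq₂).1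
                                      cases ht₂
                                      have hJm₂ : A₂.comp m₂ = some J₂ := hcc₂.trans hcomp₂
                                      have hJ₂' : J₂' = J₂ := by
                                        rw [hcm₂] at hJm₂
                                        exact Option.some.inj hJm₂
                                      cases hJ₂'
                                      have hJeq : A₁.link J₁ = A₂.link J₂ := by
                                        have e₁ : A₁.link J₁ = (c, r) := by
                                          rw [← hlink₁, ← hlr₁]
                                        have e₂ : A₂.link J₂ = (c, r) := by
                                          rw [← hlink₂, ← hlr₂]
                                        rw [e₁, e₂]
                                      have hq' : GoodPair A₁ A₂ (q₁', q₂') :=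
                                        Or.inr ⟨J₁, J₂, hcomp₁, hcomp₂, hJeq⟩
                                      obtain ⟨hm, runm⟩ :=
                                        ih _ _ _ _ (hlift₁ []) (hlift₂ []) hq'
                                      have hP : GoodPair A₁ A₂ (p₁, p₂) :=
                                        GoodPair.transfer hq (A₁.procTrans_comp hproc₁)
                                          (A₂.procTrans_comp hproc₂)
                                      refine ⟨hP, ?_⟩
                                      obtain ⟨-, -, hliftP⟩ := wm_run hw _ _ _ _ runm
                                      have hstep1 : (A₁.prod A₂).Step
                                          ((⟨(q₁, q₂), hq⟩ : ProdState A₁ A₂), [])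
                                          (VSym.call c)
                                          ((⟨(q₁', q₂'), hq'⟩ : ProdState A₁ A₂),
                                            [(⟨(p₁, p₂), hP⟩ : ProdState A₁ A₂)]) := by
                                        refine Step.call (J := Subtype.mk (J₁, J₂) hJeq)
                                          ⟨hproc₁, hproc₂⟩ hlink₁ ?_ ⟨hinit₁, hinit₂⟩
                                        show mergeComp A₁.link A₂.link (A₁.comp q₁')
                                          (A₂.comp q₂') = some (Subtype.mk (J₁, J₂) hJeq)
                                        rw [hcomp₁, hcomp₂]
                                        simp only [mergeComp]
                                        rw [dif_pos hJeq]
                                      have hstep2 : (A₁.prod A₂).Step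
                                          ((⟨(m₁, m₂), hm⟩ : ProdState A₁ A₂),
                                            [(⟨(p₁, p₂), hP⟩ : ProdState A₁ A₂)])
                                          (VSym.ret r)
                                          ((⟨(p₁, p₂), hP⟩ : ProdState A₁ A₂), []) := by
                                        refine Step.ret (J := Subtype.mk (J₁, J₂) hJeq)
                                          ?_ ⟨hfin₁, hfin₂⟩ hlr₁
                                        show mergeComp A₁.link A₂.link (A₁.comp m₁)
                                          (A₂.comp m₂) = some (Subtype.mk (J₁, J₂) hJeq)
                                        rw [hJm₁, hJm₂]
                                        simp only [mergeComp]
                                        rw [dif_pos hJeq]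
                                      exact Run.cons hstep1
                                        (Run.append (hliftP [⟨(p₁, p₂), hP⟩])
                                          (Run.cons hstep2 (Run.nil _)))
  | concat hw₁ hw₂ ih₁ ih₂ =>
      intro q₁ q₂ p₁ p₂ h₁ h₂ hq
      obtain ⟨⟨m₁, ρ₁⟩, rA₁, rB₁⟩ := run_append_split h₁
      obtain ⟨rfl, -, -⟩ := wm_run hw₁ _ _ _ _ rA₁
      obtain ⟨⟨m₂, ρ₂⟩, rA₂, rB₂⟩ := run_append_split h₂
      obtain ⟨rfl, -, -⟩ := wm_run hw₁ _ _ _ _ rA₂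
      obtain ⟨hm, run₁⟩ := ih₁ _ _ _ _ rA₁ rA₂ hq
      obtain ⟨hp, run₂⟩ := ih₂ _ _ _ _ rB₁ rB₂ hm
      exact ⟨hp, run₁.append run₂⟩

end VRA

/-- for the product VRA `B = A₁ × A₂`, a recursive run on a
well-matched word `w` from `⟨⟨q₁,q₂⟩,ε⟩` to `⟨⟨p₁,p₂⟩,ε⟩` exists iff the
corresponding recursive runs exist in `A₁` and in `A₂`; consequently
`L(B) = L(A₁) ∩ L(A₂)`. -/
theorem VRA.prod_correct {I C R P₁ P₂ Q₁ Q₂ : Type}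
    (A₁ : VRA I C R P₁ Q₁) (A₂ : VRA I C R P₂ Q₂) :
    (∀ (w : List (VSym I C R)), WellMatched w →
      ∀ q p : VRA.ProdState A₁ A₂,
        (A₁.prod A₂).Run (q, []) w (p, []) ↔
          (A₁.Run (q.1.1, []) w (p.1.1, []) ∧ A₂.Run (q.1.2, []) w (p.1.2, []))) ∧
    (A₁.prod A₂).Lang = A₁.Lang ∩ A₂.Lang := by
  have main : ∀ (w : List (VSym I C R)), WellMatched w →
      ∀ q p : VRA.ProdState A₁ A₂,
        (A₁.prod A₂).Run (q, []) w (p, []) ↔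
          (A₁.Run (q.1.1, []) w (p.1.1, []) ∧ A₂.Run (q.1.2, []) w (p.1.2, [])) := by
    intro w hw q p
    constructor
    · intro h
      exact prod_run_proj h
    · rintro ⟨h₁, h₂⟩
      obtain ⟨hp, run⟩ := prod_run_of hw q.1.1 q.1.2 p.1.1 p.1.2 h₁ h₂
        (by rcases q with ⟨⟨q₁, q₂⟩, hq⟩; exact hq)
      exact run
  refine ⟨main, ?_⟩
  ext w
  simp only [Set.mem_inter_iff]
  constructor
  · rintro ⟨qi, qf, hci, hii, hcf, hif, run⟩
    obtain ⟨r₁, r₂⟩ := prod_run_proj run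
    have hnone : ∀ x : VRA.ProdState A₁ A₂, (A₁.prod A₂).comp x = none →
        A₁.comp x.1.1 = none ∧ A₂.comp x.1.2 = none := by
      rintro ⟨⟨x₁, x₂⟩, hx⟩ hc
      rcases hx with ⟨c₁, c₂⟩ | ⟨J₁, J₂, c₁, c₂, hl⟩
      · exact ⟨c₁, c₂⟩
      · exfalso
        have hc' : mergeComp A₁.link A₂.link (A₁.comp x₁) (A₂.comp x₂) = none := hc
        rw [c₁, c₂] at hc'
        simp [mergeComp, hl] at hc'
    obtain ⟨hi₁, hi₂⟩ := hnone qi hci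
    obtain ⟨hf₁, hf₂⟩ := hnone qf hcf
    exact ⟨⟨qi.1.1, qf.1.1, hi₁, hii.1, hf₁, hif.1, r₁⟩,
           ⟨qi.1.2, qf.1.2, hi₂, hii.2, hf₂, hif.2, r₂⟩⟩
  · rintro ⟨⟨qi₁, qf₁, hci₁, hii₁, hcf₁, hif₁, run₁⟩,
           ⟨qi₂, qf₂, hci₂, hii₂, hcf₂, hif₂, run₂⟩⟩
    have hw : WellMatched w := run_wm' run₁
    have hq : VRA.GoodPair A₁ A₂ (qi₁, qi₂) := Or.inl ⟨hci₁, hci₂⟩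
    obtain ⟨hp, run⟩ := prod_run_of hw _ _ _ _ run₁ run₂ hq
    refine ⟨⟨(qi₁, qi₂), hq⟩, ⟨(qf₁, qf₂), hp⟩, ?_, ⟨hii₁, hii₂⟩, ?_, ⟨hif₁, hif₂⟩, run⟩
    · show mergeComp A₁.link A₂.link (A₁.comp qi₁) (A₂.comp qi₂) = none
      rw [hci₁, hci₂]
      rfl
    · show mergeComp A₁.link A₂.link (A₁.comp qf₁) (A₂.comp qf₂) = none
      rw [hcf₁, hcf₂]
      rfl
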